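/- arXiv:2311.12428 — 2 statements merged into one kernel-verified Lean document; each statement's English description precedes it below -/
import Mathlib

section
/- For any second countable locally compact Hausdorff étale groupoid 𝒢, one has C*_{B(𝒢)}(𝒢) = C*(𝒢). In particular, every unitary representation π of 𝒢 is a B(𝒢)-representation: for any orthonormal fundamental sequence {f_n} of the Borel Hilbert bundle 𝒢⁽⁰⁾*H_π, each function x ↦ ⟨π(x)f_n(s(x)), f_m(r(x))⟩ is a bounded Borel function. -/
open scoped BigOperators ComplexConjugate ENNReal NNReal
open MeasureTheory Filter Topology

noncomputable section

instance : Fact ((1 : ℝ≥0∞) ≤ 2) := ⟨one_le_two⟩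

/-- The ambient separable Hilbert space `ℓ²(ℕ, ℂ)`, in which the fibres of any
Borel Hilbert bundle with a fundamental sequence may be realized. -/
abbrev Hamb : Type := lp (fun _ : ℕ => ℂ) 2

instance : MeasurableSpace Hamb := borel _
instance : BorelSpace Hamb := ⟨rfl⟩

/-- A bounded complex-valued function. -/
def BddFun {X : Type} (f : X → ℂ) : Prop := ∃ M : ℝ, ∀ x, ‖f x‖ ≤ M

/-- A (second countable locally compact Hausdorff) étale groupoid: a groupoid structure
on `G` (with total operations, the product being meaningful on composable pairs
`s x = r y`), such that inversion and multiplication are continuous and the range map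
is a local homeomorphism.  The standing topological assumptions (Hausdorff, second
countable, locally compact) are imposed as typeclass assumptions in the theorems. -/
structure EtaleGroupoid (G : Type) [TopologicalSpace G] where
  mul : G → G → G
  inv : G → G
  r : G → G
  s : G → G
  r_def : ∀ x, r x = mul x (inv x)
  s_def : ∀ x, s x = mul (inv x) x
  inv_inv : ∀ x, inv (inv x) = x
  s_inv : ∀ x, s (inv x) = r x
  mul_assoc' : ∀ x y z, s x = r y → s y = r z → mul (mul x y) z = mul x (mul y z)
  r_mul : ∀ x y, s x = r y → r (mul x y) = r x
  s_mul : ∀ x y, s x = r y → s (mul x y) = s y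
  inv_mul_cancel' : ∀ x y, s x = r y → mul (inv x) (mul x y) = y
  mul_inv_cancel' : ∀ x y, s x = r y → mul (mul x y) (inv y) = x
  continuous_inv : Continuous inv
  continuous_r : Continuous r
  continuous_s : Continuous s
  continuous_mul : ∀ x y : G, s x = r y → ∀ W : Set G, IsOpen W → mul x y ∈ W →
    ∃ U V : Set G, IsOpen U ∧ IsOpen V ∧ x ∈ U ∧ y ∈ V ∧
      ∀ x' ∈ U, ∀ y' ∈ V, s x' = r y' → mul x' y' ∈ W
  etale : ∀ x : G, ∃ U : Set G, IsOpen U ∧ x ∈ U ∧ Set.InjOn r U ∧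
    ∀ V : Set G, V ⊆ U → IsOpen V → IsOpen (r '' V)

namespace EtaleGroupoid

variable {G : Type} [TopologicalSpace G] [MeasurableSpace G]

/-- The unit space `𝒢⁽⁰⁾`. -/
def units (g : EtaleGroupoid G) : Set G := Set.range g.r

/-- The range fibre `𝒢^u = r⁻¹(u)`. -/
def rFiber (g : EtaleGroupoid G) (u : G) : Set G := {x | g.r x = u}

/-- The source fibre `𝒢_u = s⁻¹(u)`. -/
def sFiber (g : EtaleGroupoid G) (u : G) : Set G := {x | g.s x = u}

/-- Membership in `C_c(𝒢)`: continuous with compact support. -/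
def IsCc (_g : EtaleGroupoid G) (f : G → ℂ) : Prop := Continuous f ∧ HasCompactSupport f

/-- Convolution: `(f * h)(x) = Σ_{y ∈ 𝒢^{r(x)}} f(y) h(y⁻¹ x)`. -/
def conv (g : EtaleGroupoid G) (f h : G → ℂ) : G → ℂ :=
  fun x => ∑' y : g.rFiber (g.r x), f (y : G) * h (g.mul (g.inv (y : G)) x)

/-- The involution `f^*(x) = conj (f (x⁻¹))`. -/
def star' (g : EtaleGroupoid G) (f : G → ℂ) : G → ℂ := fun x => conj (f (g.inv x))

/-- Iterated convolution powers: `convIter g h n = h^{*(n+1)}`. -/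
def convIter (g : EtaleGroupoid G) (h : G → ℂ) : ℕ → G → ℂ
  | 0 => h
  | n + 1 => g.conv (convIter g h n) h

/-- `B(𝒢)`: bounded Borel functions. -/
def BG (_g : EtaleGroupoid G) : Set (G → ℂ) := {f | Measurable f ∧ BddFun f}

/-- `B_c(𝒢)`: compactly supported bounded Borel functions. -/
def Bc (_g : EtaleGroupoid G) : Set (G → ℂ) :=
  {f | Measurable f ∧ BddFun f ∧ HasCompactSupport f}

/-- `B_{0,l}(𝒢)`: bounded Borel functions which are locally `B₀`, i.e. whose
restriction to `𝒢(K)` vanishes at infinity for every compact `K ⊆ 𝒢⁽⁰⁾`. -/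
def B0l (g : EtaleGroupoid G) : Set (G → ℂ) :=
  {f | Measurable f ∧ BddFun f ∧
    ∀ K : Set G, K ⊆ g.units → IsCompact K → ∀ ε : ℝ, 0 < ε →
      ∃ C : Set G, IsCompact C ∧ ∀ x : G, g.r x ∈ K → g.s x ∈ K → x ∉ C → ‖f x‖ < ε}

/-- An algebraic ideal `D ⊴ B(𝒢)`. -/
structure IsBorelIdeal (g : EtaleGroupoid G) (D : Set (G → ℂ)) : Prop where
  subset_BG : D ⊆ g.BG
  add_mem : ∀ f ∈ D, ∀ h ∈ D, f + h ∈ D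
  smul_mem : ∀ f ∈ D, ∀ c : ℂ, c • f ∈ D
  mul_mem : ∀ f ∈ D, ∀ h ∈ g.BG, h * f ∈ D

/-- A positive definite function on the groupoid. -/
def IsPosDef (g : EtaleGroupoid G) (F : G → ℂ) : Prop :=
  ∀ u ∈ g.units, ∀ n : ℕ, ∀ x : Fin n → G, (∀ i, x i ∈ g.rFiber u) → ∀ c : Fin n → ℂ,
    0 ≤ (∑ i, ∑ j, conj (c i) * c j * F (g.mul (g.inv (x i)) (x j))).re ∧
    (∑ i, ∑ j, conj (c i) * c j * F (g.mul (g.inv (x i)) (x j))).im = 0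

/-- A function is locally `C₀` (in norm) : restriction to `𝒢(K)` vanishes at
infinity for every compact `K ⊆ 𝒢⁽⁰⁾`. -/
def IsLocallyC0 (g : EtaleGroupoid G) (F : G → ℂ) : Prop :=
  ∀ K : Set G, K ⊆ g.units → IsCompact K → ∀ ε : ℝ, 0 < ε →
    ∃ C : Set G, IsCompact C ∧ ∀ x : G, g.r x ∈ K → g.s x ∈ K → x ∉ C → ‖F x‖ < ε

/-- The Haagerup property for an étale groupoid. -/
def HaagerupProperty (g : EtaleGroupoid G) : Prop :=
  ∃ F : ℕ → G → ℂ, (∀ n, Continuous (F n)) ∧ (∀ n, g.IsPosDef (F n)) ∧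
    (∀ n, ∀ u ∈ g.units, F n u = 1) ∧
    (∀ K : Set G, IsCompact K → ∀ ε : ℝ, 0 < ε →
      ∃ N : ℕ, ∀ n : ℕ, N ≤ n → ∀ x ∈ K, ‖F n x - 1‖ < ε) ∧
    (∀ n, Continuous (F n) ∧ g.IsLocallyC0 (F n))

/-- The lower integral of `F` against the induced measure `ν`:
`∫ F dν = ∫_{𝒢⁽⁰⁾} Σ_{x ∈ 𝒢^u} F(x) dμ(u)`. -/
def fiberL (g : EtaleGroupoid G) (μ : Measure G) (F : G → ℝ≥0∞) : ℝ≥0∞ :=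
  ∫⁻ u, ∑' x : g.rFiber u, F (x : G) ∂μ

/-- The lower integral of `F` against `ν⁻¹` (source fibres). -/
def fiberLs (g : EtaleGroupoid G) (μ : Measure G) (F : G → ℝ≥0∞) : ℝ≥0∞ :=
  ∫⁻ u, ∑' x : g.sFiber u, F (x : G) ∂μ

/-- The induced measure `ν` of a set. -/
def nu (g : EtaleGroupoid G) (μ : Measure G) (E : Set G) : ℝ≥0∞ :=
  g.fiberL μ (E.indicator 1)

/-- `μ` is a quasi-invariant probability measure on the unit space: the induced
measure `ν` and its image `ν⁻¹` under inversion are mutually absolutely continuous. -/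
def IsQuasiInvariant (g : EtaleGroupoid G) (μ : Measure G) : Prop :=
  IsProbabilityMeasure μ ∧ μ g.unitsᶜ = 0 ∧
    ∀ E : Set G, MeasurableSet E → (g.nu μ E = 0 ↔ g.nu μ (g.inv ⁻¹' E) = 0)

/-- `μ` is an invariant probability measure on the unit space: `ν = ν⁻¹`. -/
def IsInvariant (g : EtaleGroupoid G) (μ : Measure G) : Prop :=
  IsProbabilityMeasure μ ∧ μ g.unitsᶜ = 0 ∧
    ∀ E : Set G, MeasurableSet E → g.nu μ E = g.nu μ (g.inv ⁻¹' E)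

/-- A modular function (Radon–Nikodym derivative `Δ = dν/dν⁻¹`), chosen to be a
Borel homomorphism. -/
structure IsModular (g : EtaleGroupoid G) (μ : Measure G) (Δ : G → ℝ) : Prop where
  meas : Measurable Δ
  pos : ∀ x, 0 < Δ x
  hom : ∀ x y, g.s x = g.r y → Δ (g.mul x y) = Δ x * Δ y
  inv_eq : ∀ x, Δ (g.inv x) = (Δ x)⁻¹
  rn : ∀ F : G → ℝ≥0∞, Measurable F →
    g.fiberL μ F = g.fiberLs μ fun x => F x * ENNReal.ofReal (Δ x)

end EtaleGroupoid

/-- A unitary representation of the groupoid on a Borel Hilbert bundle.  The fibres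
are realized as (closed) subspaces of an ambient Hilbert space `E`; `op x` is a
unitary `H(s x) → H(r x)`, the assignment is a Borel homomorphism (Borel-ness being
expressed through the matrix coefficients of a fundamental sequence of Borel
sections of the bundle). -/
structure GRep {G : Type} [TopologicalSpace G] [MeasurableSpace G] (g : EtaleGroupoid G)
    (E : Type) [NormedAddCommGroup E] [InnerProductSpace ℂ E] [MeasurableSpace E] where
  fib : G → Submodule ℂ E
  op : G → E → E
  mapsTo : ∀ x : G, ∀ v ∈ fib (g.s x), op x v ∈ fib (g.r x)
  map_add : ∀ x : G, ∀ v ∈ fib (g.s x), ∀ w ∈ fib (g.s x), op x (v + w) = op x v + op x w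
  map_smul : ∀ x : G, ∀ c : ℂ, ∀ v ∈ fib (g.s x), op x (c • v) = c • op x v
  inner_op : ∀ x : G, ∀ v ∈ fib (g.s x), ∀ w ∈ fib (g.s x),
    (inner ℂ (op x v) (op x w) : ℂ) = (inner ℂ v w : ℂ)
  surj' : ∀ x : G, ∀ w ∈ fib (g.r x), ∃ v ∈ fib (g.s x), op x v = w
  mul_op : ∀ x y : G, g.s x = g.r y → ∀ v ∈ fib (g.s y), op (g.mul x y) v = op x (op y v)
  unit_op : ∀ u ∈ g.units, ∀ v ∈ fib u, op u v = v
  fundSeq : ℕ → G → E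
  fundSeq_mem : ∀ n : ℕ, ∀ u ∈ g.units, fundSeq n u ∈ fib u
  fundSeq_meas : ∀ n : ℕ, Measurable (fundSeq n)
  fundSeq_dense : ∀ u ∈ g.units, ∀ v ∈ fib u, ∀ ε : ℝ, 0 < ε →
    ∃ w ∈ Submodule.span ℂ (Set.range fun n => fundSeq n u), ‖v - w‖ < ε
  fund_coeff_meas : ∀ n m : ℕ,
    Measurable fun x : G => (inner ℂ (fundSeq m (g.r x)) (op x (fundSeq n (g.s x))) : ℂ)

namespace GRep

variable {G : Type} [TopologicalSpace G] [MeasurableSpace G] {g : EtaleGroupoid G}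
variable {E : Type} [NormedAddCommGroup E] [InnerProductSpace ℂ E] [MeasurableSpace E]

/-- The matrix coefficient `x ↦ ⟨π(x) ξ(s x), η(r x)⟩` (linear in `ξ`). -/
def coeff (π : GRep g E) (ξ η : G → E) : G → ℂ :=
  fun x => (inner ℂ (η (g.r x)) (π.op x (ξ (g.s x))) : ℂ)

/-- A fundamental sequence of Borel sections of the bundle of `π`. -/
structure IsFundSeq (π : GRep g E) (f : ℕ → G → E) : Prop where
  mem : ∀ n : ℕ, ∀ u ∈ g.units, f n u ∈ π.fib u
  meas : ∀ n : ℕ, Measurable (f n)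
  dense : ∀ u ∈ g.units, ∀ v ∈ π.fib u, ∀ ε : ℝ, 0 < ε →
    ∃ w ∈ Submodule.span ℂ (Set.range fun n => f n u), ‖v - w‖ < ε
  coeff_meas : ∀ n m : ℕ, Measurable (π.coeff (f n) (f m))

/-- `π` is a `D`-representation: some fundamental sequence has all its matrix
coefficients in `D`. -/
def IsDRep (π : GRep g E) (D : Set (G → ℂ)) : Prop :=
  ∃ f : ℕ → G → E, π.IsFundSeq f ∧ ∀ n m : ℕ, π.coeff (f n) (f m) ∈ D

/-- A square-integrable Borel section of the bundle of `π`, i.e. a vector of the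
direct integral `∫^⊕ H_π(u) dμ(u)`. -/
structure IsL2Section (π : GRep g E) (μ : MeasureTheory.Measure G) (ξ : G → E) : Prop where
  mem : ∀ u ∈ g.units, ξ u ∈ π.fib u
  meas : Measurable ξ
  sq : MeasureTheory.Integrable (fun u => ‖ξ u‖ ^ 2) μ

/-- `⟨π_μ(f) ξ, η⟩ = ∫_𝒢 f(x) ⟨π(x)ξ(s x), η(r x)⟩ Δ(x)^{-1/2} dν(x)`, the
sesquilinear pairing of the integrated form of `π` w.r.t. `μ` (with modular
function `Δ`). -/
def pairing (π : GRep g E) (μ : MeasureTheory.Measure G) (Δ : G → ℝ) (f : G → ℂ)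
    (ξ η : G → E) : ℂ :=
  ∫ u, (∑' x : g.rFiber u,
    f (x : G) * ((Δ (x : G) ^ (-(1 / 2) : ℝ) : ℝ) : ℂ) * π.coeff ξ η (x : G)) ∂μ

/-- The operator norm `‖π_μ(f)‖` of the integrated form, expressed as the supremum
of the pairings over the unit ball of (the dense subspace of square-integrable
Borel sections of) the direct integral. -/
def intNorm (π : GRep g E) (μ : MeasureTheory.Measure G) (Δ : G → ℝ) (f : G → ℂ) : ℝ :=
  sSup {t : ℝ | ∃ ξ η : G → E, π.IsL2Section μ ξ ∧ π.IsL2Section μ η ∧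
    (∫ u, ‖ξ u‖ ^ 2 ∂μ) ≤ 1 ∧ (∫ u, ‖η u‖ ^ 2 ∂μ) ≤ 1 ∧
    t = ‖π.pairing μ Δ f ξ η‖}

end GRep

namespace EtaleGroupoid

variable {G : Type} [TopologicalSpace G] [MeasurableSpace G]

/-- The set of quasi-invariant probability measures on the unit space. -/
def QIMeasures (g : EtaleGroupoid G) : Set (MeasureTheory.Measure G) :=
  {μ | g.IsQuasiInvariant μ}

/-- The seminorm `‖f‖_{D,ℳ} = sup {‖π_μ(f)‖ : π a D-representation, μ ∈ ℳ}`. -/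
def DNorm (g : EtaleGroupoid G) (D : Set (G → ℂ)) (M : Set (MeasureTheory.Measure G))
    (f : G → ℂ) : ℝ :=
  sSup {t : ℝ | ∃ π : GRep g Hamb, π.IsDRep D ∧ ∃ μ ∈ M, ∃ Δ : G → ℝ,
    g.IsModular μ Δ ∧ t = π.intNorm μ Δ f}

/-- The full norm `‖f‖_max = sup {‖π_μ(f)‖ : π any representation, μ quasi-invariant}`. -/
def maxNorm (g : EtaleGroupoid G) (f : G → ℂ) : ℝ :=
  sSup {t : ℝ | ∃ π : GRep g Hamb, ∃ μ ∈ g.QIMeasures, ∃ Δ : G → ℝ,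
    g.IsModular μ Δ ∧ t = π.intNorm μ Δ f}

/-- `‖Ind(δ_u)(f)‖`: the norm of left convolution by `f` on `ℓ²(𝒢_u)`, expressed as a
supremum of pairings against finitely supported vectors in the unit ball. -/
def IndDeltaNorm (g : EtaleGroupoid G) (u : G) (f : G → ℂ) : ℝ :=
  sSup {t : ℝ | ∃ ξ η : G → ℂ,
    (Function.support ξ).Finite ∧ Function.support ξ ⊆ g.sFiber u ∧
    (Function.support η).Finite ∧ Function.support η ⊆ g.sFiber u ∧
    (∑' x : g.sFiber u, ‖ξ (x : G)‖ ^ 2) ≤ 1 ∧ (∑' x : g.sFiber u, ‖η (x : G)‖ ^ 2) ≤ 1 ∧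
    t = ‖∑' x : g.sFiber u, g.conv f ξ (x : G) * conj (η (x : G))‖}

/-- The reduced norm `‖f‖_r = sup_{u ∈ 𝒢⁽⁰⁾} ‖Ind(δ_u)(f)‖`. -/
def redNorm (g : EtaleGroupoid G) (f : G → ℂ) : ℝ :=
  sSup {t : ℝ | ∃ u ∈ g.units, t = g.IndDeltaNorm u f}

/-- `‖Ind(μ)(f)‖`: the norm of left convolution by `f` on `L²(𝒢, ν⁻¹)`, expressed as a
supremum of pairings against bounded compactly supported Borel functions in the unit
ball of `L²(𝒢, ν⁻¹)`. -/
def IndMuNorm (g : EtaleGroupoid G) (μ : MeasureTheory.Measure G) (f : G → ℂ) : ℝ :=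
  sSup {t : ℝ | ∃ ξ η : G → ℂ, Measurable ξ ∧ Measurable η ∧ BddFun ξ ∧ BddFun η ∧
    HasCompactSupport ξ ∧ HasCompactSupport η ∧
    (∫ u, (∑' x : g.sFiber u, ‖ξ (x : G)‖ ^ 2) ∂μ) ≤ 1 ∧
    (∫ u, (∑' x : g.sFiber u, ‖η (x : G)‖ ^ 2) ∂μ) ≤ 1 ∧
    t = ‖∫ u, (∑' x : g.sFiber u, g.conv f ξ (x : G) * conj (η (x : G))) ∂μ‖}

/-- The norm of `L²(𝒢, ν⁻¹)`. -/
def L2s (g : EtaleGroupoid G) (μ : MeasureTheory.Measure G) (h : G → ℂ) : ℝ :=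
  Real.sqrt (∫ u, (∑' x : g.sFiber u, ‖h (x : G)‖ ^ 2) ∂μ)

/-- Products of `n` elements of `S` (units for `n = 0`). -/
def Spow (g : EtaleGroupoid G) (S : Set G) : ℕ → Set G
  | 0 => g.units
  | n + 1 => {z | ∃ x ∈ S, ∃ y ∈ Spow g S n, g.s x = g.r y ∧ z = g.mul x y}

/-- The ball `∪_{k ≤ n} S^k`. -/
def ball (g : EtaleGroupoid G) (S : Set G) (n : ℕ) : Set G :=
  ⋃ k ∈ Finset.range (n + 1), g.Spow S k

/-- The length function `l_S(x) = min {n ≥ 0 : x ∈ ∪_{k ≤ n} S^k}`. -/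
def lS (g : EtaleGroupoid G) (S : Set G) (x : G) : ℕ := sInf {n : ℕ | x ∈ g.ball S n}

/-- The fibre Cayley-graph metric `d(x, y) = l_S (x⁻¹ y)` (as a real number). -/
def dS (g : EtaleGroupoid G) (S : Set G) (x y : G) : ℝ := (g.lS S (g.mul (g.inv x) y) : ℝ)

/-- `S` is a compact open symmetric generating set making all fibre Cayley graphs
`δ`-hyperbolic; i.e. `𝒢` is a hyperbolic groupoid (witnessed by `S` and `δ`). -/
structure IsHyperbolicGen (g : EtaleGroupoid G) (S : Set G) (δ : ℝ) : Prop where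
  compact : IsCompact S
  isOpen : IsOpen S
  symm : ∀ x ∈ S, g.inv x ∈ S
  gen : ∀ x : G, ∃ n : ℕ, 1 ≤ n ∧ x ∈ g.Spow S n
  delta_pos : 0 < δ
  hyp : ∀ u ∈ g.units, ∀ a ∈ g.rFiber u, ∀ b ∈ g.rFiber u, ∀ c ∈ g.rFiber u,
    ∀ d ∈ g.rFiber u,
      g.dS S a b + g.dS S c d ≤ max (g.dS S a c + g.dS S b d) (g.dS S a d + g.dS S b c) + δ

/-- The ideal `ℒ^p_μ(𝒢)` of bounded Borel functions which are `p`-integrable for the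
induced measure `ν`. -/
def LpIdeal (g : EtaleGroupoid G) (μ : MeasureTheory.Measure G) (p : ℝ) : Set (G → ℂ) :=
  {f | Measurable f ∧ BddFun f ∧
    g.fiberL μ (fun x => ENNReal.ofReal (‖f x‖ ^ p)) ≠ ⊤}

/-- The `ℒ^p_μ`-seminorm `|f|_p`. -/
def lpSeminorm (g : EtaleGroupoid G) (μ : MeasureTheory.Measure G) (p : ℝ) (f : G → ℂ) : ℝ :=
  ((g.fiberL μ fun x => ENNReal.ofReal (‖f x‖ ^ p)).toReal) ^ (1 / p)

/-- `‖f‖_{ℒ^p_μ(𝒢), μ}`: the supremum of `‖π_μ(f)‖` over all `ℒ^p_μ(𝒢)`-representations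
(for an invariant `μ`, so `Δ ≡ 1`). -/
def LpDNorm (g : EtaleGroupoid G) (μ : MeasureTheory.Measure G) (p : ℝ) (f : G → ℂ) : ℝ :=
  sSup {t : ℝ | ∃ π : GRep g Hamb, π.IsDRep (g.LpIdeal μ p) ∧
    t = π.intNorm μ (fun _ => 1) f}

end EtaleGroupoid

section Statements

variable {G : Type} [TopologicalSpace G] [T2Space G] [SecondCountableTopology G]
  [LocallyCompactSpace G] [MeasurableSpace G] [BorelSpace G]


namespace EtaleGroupoid

lemma s_eq_r_inv (g : EtaleGroupoid G) (x : G) : g.s x = g.r (g.inv x) := by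
  rw [g.r_def, g.inv_inv, g.s_def]

lemma s_mem_units (g : EtaleGroupoid G) (x : G) : g.s x ∈ g.units :=
  ⟨g.inv x, (g.s_eq_r_inv x).symm⟩

lemma r_mem_units (g : EtaleGroupoid G) (x : G) : g.r x ∈ g.units := ⟨x, rfl⟩

lemma r_unit (g : EtaleGroupoid G) {u : G} (hu : u ∈ g.units) : g.r u = u := by
  obtain ⟨x, rfl⟩ := hu
  rw [g.r_def x, g.r_mul x (g.inv x) (g.s_eq_r_inv x)]
  exact g.r_def x

lemma s_unit (g : EtaleGroupoid G) {u : G} (hu : u ∈ g.units) : g.s u = u := by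
  obtain ⟨x, rfl⟩ := hu
  rw [g.r_def x, g.s_mul x (g.inv x) (g.s_eq_r_inv x), g.s_inv]
  exact g.r_def x

end EtaleGroupoid

namespace GRep

variable {g : EtaleGroupoid G}
variable {E : Type} [NormedAddCommGroup E] [InnerProductSpace ℂ E] [MeasurableSpace E]

lemma op_zero (π : GRep g E) (x : G) : π.op x 0 = 0 := by
  have h := π.map_smul x 0 0 (Submodule.zero_mem _)
  simpa using h

lemma norm_op (π : GRep g E) (x : G) {v : E} (hv : v ∈ π.fib (g.s x)) :
    ‖π.op x v‖ = ‖v‖ := by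
  have h := π.inner_op x v hv v hv
  rw [inner_self_eq_norm_sq_to_K, inner_self_eq_norm_sq_to_K] at h
  have h2 : (‖π.op x v‖ : ℝ) ^ 2 = ‖v‖ ^ 2 := by exact_mod_cast h
  nlinarith [norm_nonneg (π.op x v), norm_nonneg v]

end GRep

lemma isDRep_BG (g : EtaleGroupoid G) (E : Type) [NormedAddCommGroup E]
    [InnerProductSpace ℂ E] [MeasurableSpace E] (π : GRep g E) : π.IsDRep g.BG := by
  classical
  have hs : Measurable g.s := g.continuous_s.measurable
  have hr : Measurable g.r := g.continuous_r.measurable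
  set h : ℕ → G → ℂ := fun n => π.coeff (π.fundSeq n) (π.fundSeq n) with hh
  have hmeas : ∀ n, Measurable (h n) := fun n => π.fund_coeff_meas n n
  set A : ℕ → ℕ → Set G := fun n k => {x | ‖h n x‖ ≤ (k : ℝ) ^ 2} with hA
  have hAmeas : ∀ n k, MeasurableSet (A n k) := fun n k =>
    measurableSet_le (hmeas n).norm measurable_const
  have hval : ∀ n : ℕ, ∀ u ∈ g.units,
      ‖h n u‖ = ‖π.fundSeq n u‖ ^ 2 := by
    intro n u hu
    have : h n u = ((‖π.fundSeq n u‖ : ℝ) : ℂ) ^ 2 := by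
      show (inner ℂ (π.fundSeq n (g.r u)) (π.op u (π.fundSeq n (g.s u))) : ℂ) = _
      rw [g.r_unit hu, g.s_unit hu, π.unit_op u hu _ (π.fundSeq_mem n u hu),
        inner_self_eq_norm_sq_to_K]
      norm_cast
    rw [this, ← Complex.ofReal_pow, Complex.norm_real, Real.norm_eq_abs, abs_of_nonneg (by positivity)]
  have hAiff : ∀ n k : ℕ, ∀ u ∈ g.units,
      (u ∈ A n k ↔ ‖π.fundSeq n u‖ ≤ (k : ℝ)) := by
    intro n k u hu
    have hv := hval n u hu
    constructor
    · intro hm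
      have h2 : ‖π.fundSeq n u‖ ^ 2 ≤ (k : ℝ) ^ 2 := by rw [← hv]; exact hm
      nlinarith [norm_nonneg (π.fundSeq n u), Nat.cast_nonneg (α := ℝ) k]
    · intro hm
      show ‖h n u‖ ≤ (k : ℝ) ^ 2
      rw [hv]
      nlinarith [norm_nonneg (π.fundSeq n u)]
  set F : ℕ → ℕ → G → E := fun n k => (A n k).indicator (π.fundSeq n) with hF
  set f : ℕ → G → E := fun m => F (Nat.unpair m).1 (Nat.unpair m).2 with hf
  have hco : ∀ n k m j : ℕ, π.coeff (F n k) (F m j) =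
      (g.s ⁻¹' A n k ∩ g.r ⁻¹' A m j).indicator
        (π.coeff (π.fundSeq n) (π.fundSeq m)) := by
    intro n k m j
    funext x
    show (inner ℂ (F m j (g.r x)) (π.op x (F n k (g.s x))) : ℂ) = _
    by_cases h1 : g.s x ∈ A n k
    · by_cases h2 : g.r x ∈ A m j
      · rw [show F n k (g.s x) = π.fundSeq n (g.s x) from Set.indicator_of_mem h1 _,
          show F m j (g.r x) = π.fundSeq m (g.r x) from Set.indicator_of_mem h2 _,
          Set.indicator_of_mem (Set.mem_inter (Set.mem_preimage.2 h1) (Set.mem_preimage.2 h2))]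
        rfl
      · rw [show F m j (g.r x) = 0 from Set.indicator_of_notMem h2 _,
          Set.indicator_of_notMem (fun hm => h2 hm.2), inner_zero_left]
    · rw [show F n k (g.s x) = 0 from Set.indicator_of_notMem h1 _,
        Set.indicator_of_notMem (fun hm => h1 hm.1), π.op_zero, inner_zero_right]
  refine ⟨f, ⟨?_, ?_, ?_, ?_⟩, ?_⟩
  · intro n u hu
    by_cases hm : u ∈ A (Nat.unpair n).1 (Nat.unpair n).2
    · rw [show f n u = π.fundSeq (Nat.unpair n).1 u from Set.indicator_of_mem hm _]
      exact π.fundSeq_mem _ u hu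
    · rw [show f n u = 0 from Set.indicator_of_notMem hm _]
      exact Submodule.zero_mem _
  · intro n
    exact (π.fundSeq_meas _).indicator (hAmeas _ _)
  · intro u hu v hv ε hε
    obtain ⟨w, hw, hwe⟩ := π.fundSeq_dense u hu v hv ε hε
    refine ⟨w, ?_, hwe⟩
    refine Submodule.span_le.2 ?_ hw
    rintro _ ⟨n, rfl⟩
    set k : ℕ := ⌈‖π.fundSeq n u‖⌉₊ with hk
    have hmem : u ∈ A n k := (hAiff n k u hu).2 (Nat.le_ceil _)
    have : f (Nat.pair n k) u = π.fundSeq n u := by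
      show F (Nat.unpair (Nat.pair n k)).1 (Nat.unpair (Nat.pair n k)).2 u = _
      rw [Nat.unpair_pair]
      exact Set.indicator_of_mem hmem _
    exact Submodule.subset_span ⟨Nat.pair n k, this⟩
  · intro n m
    show Measurable (π.coeff (F (Nat.unpair n).1 (Nat.unpair n).2)
      (F (Nat.unpair m).1 (Nat.unpair m).2))
    rw [hco]
    exact (π.fund_coeff_meas _ _).indicator
      ((hs (hAmeas _ _)).inter (hr (hAmeas _ _)))
  · intro n m
    refine ⟨?_, ((Nat.unpair m).2 : ℝ) * ((Nat.unpair n).2 : ℝ), fun x => ?_⟩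
    · show Measurable (π.coeff (F (Nat.unpair n).1 (Nat.unpair n).2)
        (F (Nat.unpair m).1 (Nat.unpair m).2))
      rw [hco]
      exact (π.fund_coeff_meas _ _).indicator
        ((hs (hAmeas _ _)).inter (hr (hAmeas _ _)))
    · have hx : π.coeff (f n) (f m) x =
        ((g.s ⁻¹' A (Nat.unpair n).1 (Nat.unpair n).2 ∩
          g.r ⁻¹' A (Nat.unpair m).1 (Nat.unpair m).2).indicator
          (π.coeff (π.fundSeq (Nat.unpair n).1) (π.fundSeq (Nat.unpair m).1))) x := by
        rw [← hco]
      rw [hx]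
      by_cases hmem : x ∈ g.s ⁻¹' A (Nat.unpair n).1 (Nat.unpair n).2 ∩
          g.r ⁻¹' A (Nat.unpair m).1 (Nat.unpair m).2
      · rw [Set.indicator_of_mem hmem]
        have hb1 : ‖π.fundSeq (Nat.unpair n).1 (g.s x)‖ ≤ ((Nat.unpair n).2 : ℝ) :=
          (hAiff _ _ _ (g.s_mem_units x)).1 hmem.1
        have hb2 : ‖π.fundSeq (Nat.unpair m).1 (g.r x)‖ ≤ ((Nat.unpair m).2 : ℝ) :=
          (hAiff _ _ _ (g.r_mem_units x)).1 hmem.2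
        calc ‖π.coeff (π.fundSeq (Nat.unpair n).1) (π.fundSeq (Nat.unpair m).1) x‖
            ≤ ‖π.fundSeq (Nat.unpair m).1 (g.r x)‖ *
              ‖π.op x (π.fundSeq (Nat.unpair n).1 (g.s x))‖ := norm_inner_le_norm (𝕜 := ℂ) _ _
          _ = ‖π.fundSeq (Nat.unpair m).1 (g.r x)‖ *
              ‖π.fundSeq (Nat.unpair n).1 (g.s x)‖ := by
              rw [π.norm_op x (π.fundSeq_mem _ (g.s x) (g.s_mem_units x))]
          _ ≤ ((Nat.unpair m).2 : ℝ) * ((Nat.unpair n).2 : ℝ) :=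
              mul_le_mul hb2 hb1 (norm_nonneg _) (Nat.cast_nonneg _)
      · rw [Set.indicator_of_notMem hmem]
        simpa using mul_nonneg (Nat.cast_nonneg (α := ℝ) (Nat.unpair m).2)
          (Nat.cast_nonneg (α := ℝ) (Nat.unpair n).2)

/-- For any second countable locally compact Hausdorff étale groupoid `𝒢`,
`C*_{B(𝒢)}(𝒢) = C*(𝒢)`.  In particular every unitary representation `π` of `𝒢` is a
`B(𝒢)`-representation: for any orthonormal fundamental sequence `{f_n}` of the Borel
Hilbert bundle of `π`, each matrix coefficient `x ↦ ⟨π(x) f_n(s x), f_m(r x)⟩` is a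
bounded Borel function. -/
theorem full_cstar_is_BG_completion (g : EtaleGroupoid G) :
    (∀ f : G → ℂ, g.IsCc f → g.DNorm g.BG g.QIMeasures f = g.maxNorm f) ∧
    (∀ (E : Type) [NormedAddCommGroup E] [InnerProductSpace ℂ E] [MeasurableSpace E]
        (π : GRep g E) (fs : ℕ → G → E), π.IsFundSeq fs →
        (∀ u ∈ g.units, ∀ n : ℕ, fs n u = 0 ∨ ‖fs n u‖ = 1) →
        (∀ u ∈ g.units, ∀ n m : ℕ, n ≠ m → (inner ℂ (fs n u) (fs m u) : ℂ) = 0) →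
        ∀ n m : ℕ, π.coeff (fs n) (fs m) ∈ g.BG) ∧
    (∀ (E : Type) [NormedAddCommGroup E] [InnerProductSpace ℂ E] [MeasurableSpace E]
        (π : GRep g E), π.IsDRep g.BG) := by
  refine ⟨?_, ?_, fun E _ _ _ π => isDRep_BG g E π⟩
  · intro f _
    unfold EtaleGroupoid.DNorm EtaleGroupoid.maxNorm
    congr 1
    ext t
    constructor
    · rintro ⟨π, -, μ, hμ, Δ, hΔ, ht⟩
      exact ⟨π, μ, hμ, Δ, hΔ, ht⟩
    · rintro ⟨π, μ, hμ, Δ, hΔ, ht⟩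
      exact ⟨π, isDRep_BG g Hamb π, μ, hμ, Δ, hΔ, ht⟩
  · intro E _ _ _ π fs hfs hnorm _ n m
    refine ⟨hfs.coeff_meas n m, 1, fun x => ?_⟩
    have h1 : ‖fs n (g.s x)‖ ≤ 1 := by
      rcases hnorm (g.s x) (g.s_mem_units x) n with h | h <;> simp [h]
    have h2 : ‖fs m (g.r x)‖ ≤ 1 := by
      rcases hnorm (g.r x) (g.r_mem_units x) m with h | h <;> simp [h]
    calc ‖π.coeff (fs n) (fs m) x‖
        ≤ ‖fs m (g.r x)‖ * ‖π.op x (fs n (g.s x))‖ := norm_inner_le_norm (𝕜 := ℂ) _ _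
      _ = ‖fs m (g.r x)‖ * ‖fs n (g.s x)‖ := by
          rw [π.norm_op x (hfs.mem n (g.s x) (g.s_mem_units x))]
      _ ≤ 1 * 1 := mul_le_mul h2 h1 (norm_nonneg _) zero_le_one
      _ = 1 := one_mul 1

end Statements
end
end

section
/- Let 𝒢 be a second countable locally compact Hausdorff étale groupoid. The left regular representation λ of 𝒢 is a B_c(𝒢)-representation. In fact, for the fundamental sequence given by restrictions of a sup-norm dense sequence in C_c(𝒢), the matrix coefficient x ↦ ⟨λ(x)f(s(x)), g(r(x))⟩_{ℓ²(𝒢^{r(x)})} equals (conj(g) * conj(f*))(x) and lies in C_c(𝒢) ⊆ B_c(𝒢), for any f,g ∈ C_c(𝒢). -/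
open scoped BigOperators ComplexConjugate ENNReal NNReal
open MeasureTheory Filter Topology

noncomputable section

namespace EtaleGroupoid

variable {G : Type} [TopologicalSpace G] (g : EtaleGroupoid G)

lemma mul_inv_cancel_left {x y : G} (h : g.r x = g.r y) :
    g.mul x (g.mul (g.inv x) y) = y := by
  have h1 : g.s (g.inv x) = g.r y := by rw [g.s_inv]; exact h
  have := g.inv_mul_cancel' (g.inv x) y h1
  rwa [g.inv_inv] at this

lemma mul_s_self (z : G) : g.mul z (g.s z) = z := by
  rw [g.s_def]
  exact g.mul_inv_cancel_left rfl

lemma r_inv (x : G) : g.r (g.inv x) = g.s x := by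
  have := g.s_inv (g.inv x)
  rw [g.inv_inv] at this
  exact this.symm

lemma mul_inv_rev {a b : G} (h : g.s a = g.r b) :
    g.inv (g.mul a b) = g.mul (g.inv b) (g.inv a) := by
  set X := g.mul (g.inv b) (g.inv a) with hX
  set c := g.mul a b with hc
  have hra : g.r (g.inv a) = g.s a := g.r_inv a
  have hsb : g.s (g.inv b) = g.r b := g.s_inv b
  have hbX : g.mul b X = g.inv a := by
    rw [hX]
    exact g.mul_inv_cancel_left (by rw [hra, h])
  have hrX : g.r X = g.s b := by
    rw [hX, g.r_mul _ _ (by rw [hsb, hra]; exact h.symm), g.r_inv]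
  have hcX : g.mul c X = g.r a := by
    rw [hc, g.mul_assoc' a b X h (by rw [hrX]), hbX, ← g.r_def]
  have hsc : g.s c = g.s b := g.s_mul a b h
  have h1 : X = g.mul (g.inv c) (g.mul c X) :=
    (g.inv_mul_cancel' c X (by rw [hsc, hrX])).symm
  have h2 : X = g.inv c := by
    rw [h1, hcX, ← g.r_mul a b h, ← hc, ← g.s_inv c]
    exact g.mul_s_self (g.inv c)
  exact h2.symm

lemma inv_mul_fiber {x y : G} (h : g.r y = g.r x) :
    g.inv (g.mul (g.inv y) x) = g.mul (g.inv x) y := by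
  have h1 : g.s (g.inv y) = g.r x := by rw [g.s_inv, h]
  rw [g.mul_inv_rev h1, g.inv_inv]

lemma continuousAt_mul2 {X : Type*} [TopologicalSpace X] {a b : X → G} {t₀ : X}
    (ha : ContinuousAt a t₀) (hb : ContinuousAt b t₀)
    (hc : ∀ᶠ t in 𝓝 t₀, g.s (a t) = g.r (b t)) :
    ContinuousAt (fun t => g.mul (a t) (b t)) t₀ := by
  intro W hW
  rcases mem_nhds_iff.mp hW with ⟨W', hsub, hWo, hmem⟩
  obtain ⟨U, V, hUo, hVo, haU, hbV, hprod⟩ :=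
    g.continuous_mul (a t₀) (b t₀) hc.self_of_nhds W' hWo hmem
  rw [Filter.mem_map]
  filter_upwards [ha.preimage_mem_nhds (hUo.mem_nhds haU),
    hb.preimage_mem_nhds (hVo.mem_nhds hbV), hc] with t h1 h2 h3
  exact hsub (hprod _ h1 _ h2 h3)

lemma continuousOn_mul2 :
    ContinuousOn (fun p : G × G => g.mul p.1 p.2) {p : G × G | g.s p.1 = g.r p.2} := by
  intro p hp
  intro W hW
  rcases mem_nhds_iff.mp hW with ⟨W', hsub, hWo, hmem⟩
  obtain ⟨U, V, hUo, hVo, haU, hbV, hprod⟩ := g.continuous_mul p.1 p.2 hp W' hWo hmem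
  rw [Filter.mem_map, mem_nhdsWithin]
  refine ⟨U ×ˢ V, hUo.prod hVo, ⟨haU, hbV⟩, ?_⟩
  rintro ⟨q1, q2⟩ ⟨⟨hq1, hq2⟩, hqc⟩
  exact hsub (hprod _ hq1 _ hq2 hqc)

lemma fiber_inter_finite {K : Set G} (hK : IsCompact K) (u : G) :
    (K ∩ g.rFiber u).Finite := by
  choose U hUo hxU hUinj _ using g.etale
  obtain ⟨t, ht⟩ := hK.elim_finite_subcover U hUo (fun x hx => Set.mem_iUnion.mpr ⟨x, hxU x⟩)
  have hfin : (⋃ x ∈ (t : Set G), U x ∩ g.rFiber u).Finite :=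
    Set.Finite.biUnion t.finite_toSet (fun x _ =>
      Set.Subsingleton.finite (fun z hz w hw => hUinj x hz.1 hw.1 (by
        have h1 : g.r z = u := hz.2
        have h2 : g.r w = u := hw.2
        rw [h1, h2])))
  refine hfin.subset (fun z hz => ?_)
  rcases Set.mem_iUnion₂.mp (ht hz.1) with ⟨x, hxt, hzx⟩
  exact Set.mem_iUnion₂.mpr ⟨x, hxt, hzx, hz.2⟩

lemma exists_section [Nonempty G] {y : G} {V : Set G} (hVo : IsOpen V) (hyV : y ∈ V)
    (hinj : Set.InjOn g.r V) (himg : ∀ V' ⊆ V, IsOpen V' → IsOpen (g.r '' V')) :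
    ∃ σ : G → G, (∀ u ∈ g.r '' V, σ u ∈ V ∧ g.r (σ u) = u) ∧
      (∀ z ∈ V, σ (g.r z) = z) ∧ ContinuousOn σ (g.r '' V) := by
  refine ⟨Function.invFunOn g.r V, fun u hu => ?_, fun z hz => ?_, ?_⟩
  · rcases hu with ⟨a, ha, rfl⟩
    exact ⟨Function.invFunOn_mem ⟨a, ha, rfl⟩, Function.invFunOn_eq ⟨a, ha, rfl⟩⟩
  · exact hinj (Function.invFunOn_mem ⟨z, hz, rfl⟩) hz (Function.invFunOn_eq ⟨z, hz, rfl⟩)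
  · rw [continuousOn_iff]
    intro u hu t hto hmt
    refine ⟨g.r '' (t ∩ V), himg _ Set.inter_subset_right (hto.inter hVo), ?_, ?_⟩
    · rcases hu with ⟨a, ha, rfl⟩
      refine ⟨Function.invFunOn g.r V (g.r a), ⟨hmt, Function.invFunOn_mem ⟨a, ha, rfl⟩⟩,
        Function.invFunOn_eq ⟨a, ha, rfl⟩⟩
    · rintro u' ⟨⟨w, ⟨hwt, hwV⟩, rfl⟩, -⟩
      have h1 : Function.invFunOn g.r V (g.r w) ∈ V := Function.invFunOn_mem ⟨w, hwV, rfl⟩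
      have h2 : g.r (Function.invFunOn g.r V (g.r w)) = g.r w :=
        Function.invFunOn_eq ⟨w, hwV, rfl⟩
      have : Function.invFunOn g.r V (g.r w) = w := hinj h1 hwV h2
      simpa [this] using hwt

lemma exists_disjoint_opens [T2Space G] (S : Finset G) :
    ∃ W : G → Set G, (∀ y ∈ S, IsOpen (W y) ∧ y ∈ W y) ∧
      ∀ y ∈ S, ∀ z ∈ S, y ≠ z → Disjoint (W y) (W z) := by
  have H : ∀ y z : G, ∃ p : Set G × Set G, y ≠ z →
      IsOpen p.1 ∧ IsOpen p.2 ∧ y ∈ p.1 ∧ z ∈ p.2 ∧ Disjoint p.1 p.2 := by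
    intro y z
    by_cases h : y = z
    · exact ⟨(Set.univ, Set.univ), fun hne => absurd h hne⟩
    · obtain ⟨u, v, h1, h2, h3, h4, h5⟩ := t2_separation h
      exact ⟨(u, v), fun _ => ⟨h1, h2, h3, h4, h5⟩⟩
  choose A hA using H
  classical
  refine ⟨fun y => ⋂ z ∈ S.erase y, (A y z).1 ∩ (A z y).2, fun y hy => ⟨?_, ?_⟩, ?_⟩
  · exact isOpen_biInter_finset (fun z hz => ((hA y z (Finset.ne_of_mem_erase hz).symm).1).inter
      (hA z y (Finset.ne_of_mem_erase hz)).2.1)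
  · refine Set.mem_iInter₂.mpr (fun z hz => ?_)
    have hzy : z ≠ y := Finset.ne_of_mem_erase hz
    exact ⟨(hA y z hzy.symm).2.2.1, (hA z y hzy).2.2.2.1⟩
  · intro y hy z hz hyz
    have h1 : (⋂ w ∈ S.erase y, (A y w).1 ∩ (A w y).2) ⊆ (A y z).1 := by
      intro t ht
      exact (Set.mem_iInter₂.mp ht z (Finset.mem_erase.mpr ⟨hyz.symm, hz⟩)).1
    have h2 : (⋂ w ∈ S.erase z, (A z w).1 ∩ (A w z).2) ⊆ (A y z).2 := by
      intro t ht
      exact (Set.mem_iInter₂.mp ht y (Finset.mem_erase.mpr ⟨hyz, hy⟩)).2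
    exact ((hA y z hyz).2.2.2.2).mono h1 h2

end EtaleGroupoid

namespace EtaleGroupoid
open ComplexConjugate
variable {G : Type} [TopologicalSpace G] (g : EtaleGroupoid G)

lemma coeff_fun_continuous [T2Space G] {f h : G → ℂ} (hf : Continuous f)
    (hh : Continuous h) (hhc : HasCompactSupport h) :
    Continuous fun x : G =>
      ∑' y : g.rFiber (g.r x), f (g.mul (g.inv x) (y : G)) * conj (h (y : G)) := by
  rw [continuous_iff_continuousAt]
  intro x₀
  haveI : Nonempty G := ⟨x₀⟩
  classical
  set K := tsupport h with hK
  set u₀ := g.r x₀ with hu₀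
  have hfin := g.fiber_inter_finite hhc u₀
  set S₀ : Finset G := hfin.toFinset with hS₀
  have hS₀mem : ∀ y, y ∈ S₀ ↔ (y ∈ K ∧ g.r y = u₀) := by
    intro y; rw [hS₀, Set.Finite.mem_toFinset]; exact Iff.rfl
  choose U hUo hxU hUinj hUimg using g.etale
  obtain ⟨W, hWprop, hWdisj⟩ := exists_disjoint_opens (G := G) S₀
  set V : G → Set G := fun y => U y ∩ W y with hV
  have hVo : ∀ y ∈ S₀, IsOpen (V y) := fun y hy => (hUo y).inter (hWprop y hy).1
  have hyV : ∀ y ∈ S₀, y ∈ V y := fun y hy => ⟨hxU y, (hWprop y hy).2⟩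
  have hVinj : ∀ y, Set.InjOn g.r (V y) := fun y => (hUinj y).mono Set.inter_subset_left
  have hVimg : ∀ y, ∀ V' ⊆ V y, IsOpen V' → IsOpen (g.r '' V') :=
    fun y V' hs ho => hUimg y V' (hs.trans Set.inter_subset_left) ho
  have hsec : ∀ y : G, ∃ σ : G → G, y ∈ S₀ →
      ((∀ u ∈ g.r '' V y, σ u ∈ V y ∧ g.r (σ u) = u) ∧ (∀ z ∈ V y, σ (g.r z) = z) ∧
        ContinuousOn σ (g.r '' V y)) := by
    intro y
    by_cases hy : y ∈ S₀
    · obtain ⟨σ, h1, h2, h3⟩ := g.exists_section (hVo y hy) (hyV y hy) (hVinj y) (hVimg y)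
      exact ⟨σ, fun _ => ⟨h1, h2, h3⟩⟩
    · exact ⟨id, fun hc => absurd hc hy⟩
  choose σ hσ using hsec
  set T : G → Set G := fun y => g.r '' V y with hT
  have hTopen : ∀ y ∈ S₀, IsOpen (T y) := fun y hy => hVimg y (V y) subset_rfl (hVo y hy)
  have hu₀T : ∀ y ∈ S₀, u₀ ∈ T y := fun y hy => ⟨y, hyV y hy, ((hS₀mem y).mp hy).2⟩
  set Kout := K \ ⋃ y ∈ S₀, V y with hKout
  have hKoutc : IsCompact Kout := hhc.diff (isOpen_biUnion fun y hy => hVo y hy)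
  have hu₀out : u₀ ∉ g.r '' Kout := by
    rintro ⟨w, ⟨hwK, hwU⟩, hwr⟩
    exact hwU (Set.mem_biUnion ((hS₀mem w).mpr ⟨hwK, hwr⟩)
      (hyV w ((hS₀mem w).mpr ⟨hwK, hwr⟩)))
  set N : Set G := (⋂ y ∈ S₀, T y) ∩ (g.r '' Kout)ᶜ with hN
  have hNopen : IsOpen N := (isOpen_biInter_finset hTopen).inter
    (hKoutc.image g.continuous_r).isClosed.isOpen_compl
  have hu₀N : u₀ ∈ N := ⟨Set.mem_iInter₂.mpr hu₀T, hu₀out⟩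
  set A : Set G := g.r ⁻¹' N with hA
  have hAopen : IsOpen A := hNopen.preimage g.continuous_r
  have hx₀A : x₀ ∈ A := hu₀N
  have hσmem : ∀ x ∈ A, ∀ y ∈ S₀, σ y (g.r x) ∈ V y ∧ g.r (σ y (g.r x)) = g.r x := by
    intro x hx y hy
    exact (hσ y hy).1 _ (Set.mem_iInter₂.mp (Set.mem_preimage.mp hx).1 y hy)
  have key : ∀ x ∈ A, (∑' y : g.rFiber (g.r x), f (g.mul (g.inv x) (y : G)) * conj (h (y : G)))
      = ∑ y ∈ S₀, f (g.mul (g.inv x) (σ y (g.r x))) * conj (h (σ y (g.r x))) := by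
    intro x hx
    have hrN : g.r x ∈ N := hx
    set t : Finset ↥(g.rFiber (g.r x)) := S₀.attach.image
      (fun y : {a // a ∈ S₀} =>
        (⟨σ y.1 (g.r x), (hσmem x hx y.1 y.2).2⟩ : ↥(g.rFiber (g.r x)))) with ht
    have hzero : ∀ z : ↥(g.rFiber (g.r x)), z ∉ t →
        f (g.mul (g.inv x) (z : G)) * conj (h (z : G)) = 0 := by
      intro z hzt
      by_cases hz0 : h (z : G) = 0
      · simp [hz0]
      exfalso
      have hzK : (z : G) ∈ K := subset_tsupport _ hz0
      have hrz : g.r (z : G) = g.r x := z.2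
      have hzout : (z : G) ∉ Kout := fun hzo => hrN.2 ⟨(z : G), hzo, hrz⟩
      have hzin : (z : G) ∈ ⋃ y ∈ S₀, V y := by
        by_contra hno
        exact hzout ⟨hzK, hno⟩
      rcases Set.mem_iUnion₂.mp hzin with ⟨y, hy, hzy⟩
      have hσz : σ y (g.r x) = (z : G) := by
        have h2 := (hσ y hy).2.1 (z : G) hzy
        rw [hrz] at h2
        exact h2
      refine hzt ?_
      rw [ht]
      exact Finset.mem_image.mpr ⟨⟨y, hy⟩, Finset.mem_attach _ _, Subtype.ext hσz⟩
    have hinj2 : ∀ y ∈ S₀.attach, ∀ y' ∈ S₀.attach,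
        (fun y : {a // a ∈ S₀} =>
          (⟨σ y.1 (g.r x), (hσmem x hx y.1 y.2).2⟩ : ↥(g.rFiber (g.r x)))) y
          = (fun y : {a // a ∈ S₀} =>
          (⟨σ y.1 (g.r x), (hσmem x hx y.1 y.2).2⟩ : ↥(g.rFiber (g.r x)))) y' → y = y' := by
      intro y _ y' _ heq
      by_contra hne
      have hne' : (y : G) ≠ (y' : G) := fun hc => hne (Subtype.ext hc)
      have hd := hWdisj _ y.2 _ y'.2 hne'
      have h1 : σ (y : G) (g.r x) ∈ W (y : G) := ((hσmem x hx _ y.2).1).2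
      have h2 : σ (y' : G) (g.r x) ∈ W (y' : G) := ((hσmem x hx _ y'.2).1).2
      have heq' : σ (y : G) (g.r x) = σ (y' : G) (g.r x) := Subtype.ext_iff.mp heq
      rw [heq'] at h1
      exact Set.disjoint_left.mp hd h1 h2
    calc (∑' y : g.rFiber (g.r x), f (g.mul (g.inv x) (y : G)) * conj (h (y : G)))
        = ∑ z ∈ t, f (g.mul (g.inv x) (z : G)) * conj (h (z : G)) := tsum_eq_sum hzero
      _ = ∑ y ∈ S₀.attach, f (g.mul (g.inv x) (σ (y : G) (g.r x)))
            * conj (h (σ (y : G) (g.r x))) := by rw [ht]; exact Finset.sum_image hinj2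
      _ = ∑ y ∈ S₀, f (g.mul (g.inv x) (σ y (g.r x))) * conj (h (σ y (g.r x))) :=
          Finset.sum_attach S₀ (fun y => f (g.mul (g.inv x) (σ y (g.r x)))
            * conj (h (σ y (g.r x))))
  have hGc : ContinuousAt (fun x => ∑ y ∈ S₀,
      f (g.mul (g.inv x) (σ y (g.r x))) * conj (h (σ y (g.r x)))) x₀ := by
    apply tendsto_finset_sum
    intro y hy
    have hc1 : ContinuousAt (fun x => σ y (g.r x)) x₀ :=
      ContinuousAt.comp (((hσ y hy).2.2).continuousAt
        ((hTopen y hy).mem_nhds (hu₀T y hy))) g.continuous_r.continuousAt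
    have hc2 : ContinuousAt (fun x => g.mul (g.inv x) (σ y (g.r x))) x₀ := by
      apply g.continuousAt_mul2 g.continuous_inv.continuousAt hc1
      filter_upwards [hAopen.mem_nhds hx₀A] with x hx
      rw [g.s_inv, (hσmem x hx y hy).2]
    exact ContinuousAt.mul (hf.continuousAt.comp hc2)
      ((Complex.continuous_conj.continuousAt).comp (hh.continuousAt.comp hc1))
  exact hGc.congr (Filter.eventuallyEq_of_mem (hAopen.mem_nhds hx₀A)
    (fun x hx => (key x hx).symm))

end EtaleGroupoid

namespace EtaleGroupoid
variable {G : Type} [TopologicalSpace G] (g : EtaleGroupoid G)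
open ComplexConjugate

lemma coeff_fun_hcs [T2Space G] {f h : G → ℂ} (hfc : HasCompactSupport f)
    (hhc : HasCompactSupport h) :
    HasCompactSupport fun x : G =>
      ∑' y : g.rFiber (g.r x), f (g.mul (g.inv x) (y : G)) * conj (h (y : G)) := by
  classical
  set C : Set (G × G) := ((tsupport h) ×ˢ (g.inv '' tsupport f)) ∩
    {p : G × G | g.s p.1 = g.r p.2} with hC
  have hCc : IsCompact C := (hhc.prod (hfc.image g.continuous_inv)).inter_right
    (isClosed_eq (g.continuous_s.comp continuous_fst) (g.continuous_r.comp continuous_snd))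
  have hMc : IsCompact ((fun p : G × G => g.mul p.1 p.2) '' C) :=
    hCc.image_of_continuousOn (g.continuousOn_mul2.mono Set.inter_subset_right)
  apply HasCompactSupport.intro hMc
  intro x hxM
  by_contra hFx
  obtain ⟨y, hy⟩ : ∃ y : ↥(g.rFiber (g.r x)),
      f (g.mul (g.inv x) (y : G)) * conj (h (y : G)) ≠ 0 := by
    by_contra hno
    push_neg at hno
    exact hFx ((tsum_congr hno).trans tsum_zero)
  have hf0 : f (g.mul (g.inv x) (y : G)) ≠ 0 := fun hc => hy (by rw [hc, zero_mul])
  have hh0 : h (y : G) ≠ 0 := by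
    intro hc
    apply hy
    rw [hc, map_zero, mul_zero]
  set w := g.mul (g.inv x) (y : G) with hw
  have hry : g.r (y : G) = g.r x := y.2
  have hcomp : g.s (g.inv x) = g.r (y : G) := by rw [g.s_inv, hry]
  have hinvw : g.inv w = g.mul (g.inv (y : G)) x := by
    rw [hw, g.mul_inv_rev hcomp, g.inv_inv]
  have hxeq : g.mul (y : G) (g.inv w) = x := by
    rw [hinvw]
    exact g.mul_inv_cancel_left hry
  apply hxM
  refine ⟨((y : G), g.inv w), ⟨⟨subset_tsupport _ hh0, ⟨w, subset_tsupport _ hf0, rfl⟩⟩, ?_⟩, hxeq⟩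
  show g.s (y : G) = g.r (g.inv w)
  rw [g.r_inv, hw, g.s_mul _ _ hcomp]

end EtaleGroupoid


section Statements

variable {G : Type} [TopologicalSpace G] [T2Space G] [SecondCountableTopology G]
  [LocallyCompactSpace G] [MeasurableSpace G] [BorelSpace G]

/-- `π` is (a realization of) the left regular representation of `𝒢` (fibres
`ℓ²(𝒢^u)`, `λ(x)ξ(y) = ξ(x⁻¹y)`): it carries the fundamental sequence given by the
restrictions `σ(f_n)` of a sup-norm dense sequence `{f_n} ⊆ C_c(𝒢)`, with matrix
coefficients `⟨λ(x) σ(f_n)(s x), σ(f_m)(r x)⟩_{ℓ²(𝒢^{r x})}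
  = Σ_{y ∈ 𝒢^{r x}} f_n(x⁻¹y) conj(f_m(y))`. -/
def IsLeftRegularRep (g : EtaleGroupoid G) {E : Type} [NormedAddCommGroup E]
    [InnerProductSpace ℂ E] [MeasurableSpace E] (π : GRep g E) : Prop :=
  ∃ fs : ℕ → G → ℂ, (∀ n, g.IsCc (fs n)) ∧
    (∀ h : G → ℂ, g.IsCc h → ∀ ε : ℝ, 0 < ε → ∃ n, ∀ x : G, ‖h x - fs n x‖ < ε) ∧
    ∃ σ : ℕ → G → E, π.IsFundSeq σ ∧
      ∀ n m : ℕ, π.coeff (σ n) (σ m) = fun x : G =>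
        ∑' y : g.rFiber (g.r x), fs n (g.mul (g.inv x) (y : G)) * conj (fs m (y : G))

/-- The left regular representation of `𝒢` is a
`B_c(𝒢)`-representation.  In fact, for `f, h ∈ C_c(𝒢)` the matrix coefficient
`x ↦ ⟨λ(x) f(s x), h(r x)⟩_{ℓ²(𝒢^{r x})}` equals `(conj h) * (conj (f*))` and lies in
`C_c(𝒢) ⊆ B_c(𝒢)`. -/
theorem left_regular_is_Bc_representation (g : EtaleGroupoid G) :
    (∀ (E : Type) [NormedAddCommGroup E] [InnerProductSpace ℂ E] [MeasurableSpace E]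
      (π : GRep g E), IsLeftRegularRep g π → π.IsDRep g.Bc) ∧
    (∀ f h : G → ℂ, g.IsCc f → g.IsCc h →
      ((fun x : G => ∑' y : g.rFiber (g.r x),
          f (g.mul (g.inv x) (y : G)) * conj (h (y : G))) =
        g.conv (fun y => conj (h y)) (fun z => conj (g.star' f z))) ∧
      g.IsCc (fun x : G => ∑' y : g.rFiber (g.r x),
        f (g.mul (g.inv x) (y : G)) * conj (h (y : G))) ∧
      (fun x : G => ∑' y : g.rFiber (g.r x),
        f (g.mul (g.inv x) (y : G)) * conj (h (y : G))) ∈ g.Bc) := by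
  classical
  have hconv : ∀ f h : G → ℂ,
      (fun x : G => ∑' y : g.rFiber (g.r x), f (g.mul (g.inv x) (y : G)) * conj (h (y : G)))
        = g.conv (fun y => conj (h y)) (fun z => conj (g.star' f z)) := by
    intro f h
    funext x
    refine tsum_congr (fun y => ?_)
    have hry : g.r (y : G) = g.r x := y.2
    show f (g.mul (g.inv x) (y : G)) * conj (h (y : G))
      = conj (h (y : G)) * conj (conj (f (g.inv (g.mul (g.inv (y : G)) x))))
    rw [g.inv_mul_fiber hry, Complex.conj_conj]
    exact mul_comm _ _
  have main2 : ∀ f h : G → ℂ, g.IsCc f → g.IsCc h →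
      g.IsCc (fun x : G => ∑' y : g.rFiber (g.r x),
        f (g.mul (g.inv x) (y : G)) * conj (h (y : G))) := by
    intro f h hf hh
    exact ⟨g.coeff_fun_continuous hf.1 hh.1 hh.2, g.coeff_fun_hcs hf.2 hh.2⟩
  have mainBc : ∀ f h : G → ℂ, g.IsCc f → g.IsCc h →
      (fun x : G => ∑' y : g.rFiber (g.r x),
        f (g.mul (g.inv x) (y : G)) * conj (h (y : G))) ∈ g.Bc := by
    intro f h hf hh
    obtain ⟨hcont, hhcs⟩ := main2 f h hf hh
    obtain ⟨M, hM⟩ := hcont.bounded_above_of_compact_support hhcs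
    exact ⟨hcont.measurable, ⟨M, hM⟩, hhcs⟩
  refine ⟨?_, fun f h hf hh => ⟨hconv f h, main2 f h hf hh, mainBc f h hf hh⟩⟩
  intro E _ _ _ π hπ
  obtain ⟨fs, hfs, -, σ, hfund, hcoeff⟩ := hπ
  refine ⟨σ, hfund, fun n m => ?_⟩
  rw [hcoeff n m]
  exact mainBc (fs n) (fs m) (hfs n) (hfs m)

end Statements
end
end
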